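/- Existence of a non-trivial fixed point at high signal: There exist η > 0 and λ₀ > 0 such that for all λ ≥ λ₀ there exists (q₁,q₂) ∈ Γ(λ) with q₁ ≥ η and q₂ ≥ η. -/

import Mathlib

open MeasureTheory ProbabilityTheory Filter Real
open scoped Topology

noncomputable section

/-- Standard Gaussian measure on `ℝ`. -/
def stdG : Measure ℝ := gaussianReal 0 1

/-- The weight `exp(√γ·x·z + γ·x·x₀ − γ·x²/2)` appearing in the scalar Gaussian channel. -/
def scalarWeight (γ x₀ z x : ℝ) : ℝ :=
  Real.exp (Real.sqrt γ * x * z + γ * x * x₀ - γ * x ^ 2 / 2)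

/-- Free energy `ψ_P(γ)` of the scalar Gaussian channel with prior `P`. -/
def psiF (P : Measure ℝ) [IsProbabilityMeasure P] (γ : ℝ) : ℝ :=
  ∫ p : ℝ × ℝ, Real.log (∫ x, scalarWeight γ p.1 p.2 x ∂P) ∂(P.prod stdG)

/-- Posterior mean `⟨x⟩_γ` in the scalar Gaussian channel (`x₀` is the signal, `z` the noise). -/
def postMean (P : Measure ℝ) (γ x₀ z : ℝ) : ℝ :=
  (∫ x, x * scalarWeight γ x₀ z x ∂P) / (∫ x, scalarWeight γ x₀ z x ∂P)

/-- Overlap `F_P(γ) = E[X₀·⟨x⟩_γ]` of the scalar Gaussian channel. -/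
def Fov (P : Measure ℝ) [IsProbabilityMeasure P] (γ : ℝ) : ℝ :=
  ∫ p : ℝ × ℝ, p.1 * postMean P γ p.1 p.2 ∂(P.prod stdG)

/-- The set `Γ(λ)` of fixed points of the state evolution equations. -/
def Gam (PU PV : Measure ℝ) [IsProbabilityMeasure PU] [IsProbabilityMeasure PV]
    (lam : ℝ) : Set (ℝ × ℝ) :=
  {q | 0 ≤ q.1 ∧ 0 ≤ q.2 ∧ q.2 = Fov PU (lam * q.1) ∧ q.1 = Fov PV (lam * q.2)}

/-- The replica-symmetric potential `𝓕(λ,q₁,q₂)`. -/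
def rsF (PU PV : Measure ℝ) [IsProbabilityMeasure PU] [IsProbabilityMeasure PV]
    (lam q₁ q₂ : ℝ) : ℝ :=
  psiF PU (lam * q₁) + psiF PV (lam * q₂) - lam / 2 * q₁ * q₂

/-- Prior distribution of the pair of vectors `(u,v)`. -/
def prior (PU PV : Measure ℝ) [IsProbabilityMeasure PU] [IsProbabilityMeasure PV]
    (n : ℕ) : Measure ((Fin n → ℝ) × (Fin n → ℝ)) :=
  (Measure.pi fun _ => PU).prod (Measure.pi fun _ => PV)

/-- Law of the Gaussian noise matrix `Z`. -/
def noiseM (n : ℕ) : Measure (Fin n → Fin n → ℝ) :=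
  Measure.pi fun _ => Measure.pi fun _ => stdG

/-- Joint law of `((U,V),Z)`. -/
def sampleM (PU PV : Measure ℝ) [IsProbabilityMeasure PU] [IsProbabilityMeasure PV]
    (n : ℕ) : Measure (((Fin n → ℝ) × (Fin n → ℝ)) × (Fin n → Fin n → ℝ)) :=
  (prior PU PV n).prod (noiseM n)

/-- Hamiltonian `H_n(u,v)` of the planted bipartite model. -/
def Ham (lam : ℝ) (n : ℕ) (U V : Fin n → ℝ) (Z : Fin n → Fin n → ℝ)
    (u v : Fin n → ℝ) : ℝ :=
  ∑ i : Fin n, ∑ j : Fin n,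
    (Real.sqrt (lam / n) * u i * v j * Z i j
      + lam / n * (u i * U i * v j * V j)
      - lam / (2 * n) * (u i ^ 2 * v j ^ 2))

/-- Partition function `Z_n = ∫ e^{H_n(u,v)} dP₀ⁿ(u,v)`. -/
def partFun (PU PV : Measure ℝ) [IsProbabilityMeasure PU] [IsProbabilityMeasure PV]
    (lam : ℝ) (n : ℕ)
    (ω : ((Fin n → ℝ) × (Fin n → ℝ)) × (Fin n → Fin n → ℝ)) : ℝ :=
  ∫ uv, Real.exp (Ham lam n ω.1.1 ω.1.2 ω.2 uv.1 uv.2) ∂(prior PU PV n)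

/-- Free energy `F_n(λ) = (1/n)·E[log Z_n]`. -/
def freeEnergy (PU PV : Measure ℝ) [IsProbabilityMeasure PU] [IsProbabilityMeasure PV]
    (n : ℕ) (lam : ℝ) : ℝ :=
  (1 / (n : ℝ)) * ∫ ω, Real.log (partFun PU PV lam n ω) ∂(sampleM PU PV n)

/-- Gibbs (posterior) expectation `⟨f(u,v)⟩` given the realization `ω = ((U,V),Z)`. -/
def gibbs (PU PV : Measure ℝ) [IsProbabilityMeasure PU] [IsProbabilityMeasure PV]
    (lam : ℝ) (n : ℕ)
    (ω : ((Fin n → ℝ) × (Fin n → ℝ)) × (Fin n → Fin n → ℝ))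
    (f : (Fin n → ℝ) × (Fin n → ℝ) → ℝ) : ℝ :=
  (∫ uv, f uv * Real.exp (Ham lam n ω.1.1 ω.1.2 ω.2 uv.1 uv.2) ∂(prior PU PV n))
    / partFun PU PV lam n ω

/-- Rescaled scalar product `x·y = (1/n)·Σᵢ xᵢyᵢ`. -/
def ovDot (n : ℕ) (x y : Fin n → ℝ) : ℝ := (1 / (n : ℝ)) * ∑ i, x i * y i

section AuxFP

instance : IsProbabilityMeasure stdG := by unfold stdG; infer_instance

lemma sqrt_tendsto_atTop' : Tendsto Real.sqrt atTop atTop := by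
  apply tendsto_atTop_atTop.2
  intro b
  refine ⟨b ^ 2, fun a ha => ?_⟩
  calc b ≤ |b| := le_abs_self b
    _ = Real.sqrt (b ^ 2) := (Real.sqrt_sq_eq_abs b).symm
    _ ≤ Real.sqrt a := Real.sqrt_le_sqrt ha

lemma integrableOn_finset' (S : Finset ℝ) (f : ℝ → ℝ) (P : Measure ℝ) [IsFiniteMeasure P] :
    IntegrableOn f (↑S : Set ℝ) P := by
  set g : ℝ → ℝ := fun x => ∑ s ∈ S, Set.indicator {s} (fun _ => f s) x with hg
  have hmeas : Measurable g := by
    apply Finset.measurable_sum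
    intro s _
    exact measurable_const.indicator (measurableSet_singleton s)
  have hfg : g =ᵐ[P.restrict ↑S] f := by
    filter_upwards [ae_restrict_mem S.measurableSet] with x hx
    simp only [hg, Set.indicator_apply, Set.mem_singleton_iff]
    rw [Finset.sum_ite_eq S x (fun s => f s)]
    simp [Finset.mem_coe.mp hx]
  have hgi : Integrable g (P.restrict ↑S) := by
    apply Integrable.mono' (integrable_const (∑ s ∈ S, |f s|)) hmeas.aestronglyMeasurable
    refine ae_of_all _ fun x => ?_
    calc ‖g x‖ ≤ ∑ s ∈ S, ‖Set.indicator {s} (fun _ => f s) x‖ := norm_sum_le _ _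
      _ ≤ ∑ s ∈ S, |f s| := by
          apply Finset.sum_le_sum
          intro s _
          rw [Real.norm_eq_abs]
          by_cases h : x ∈ ({s} : Set ℝ) <;> simp [Set.indicator_apply, h]
      _ = _ := rfl
  exact hgi.congr hfg

lemma integral_eq_sum {P : Measure ℝ} [IsProbabilityMeasure P] {S : Finset ℝ}
    (hPS : P ((↑S : Set ℝ)ᶜ) = 0) (f : ℝ → ℝ) :
    ∫ x, f x ∂P = ∑ s ∈ S, (P {s}).toReal * f s := by
  have hae : ∀ᵐ x ∂P, x ∈ (↑S : Set ℝ) := by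
    rw [ae_iff]; exact hPS
  have h1 : ∫ x, f x ∂P = ∫ x in (↑S : Set ℝ), f x ∂P := by
    rw [Measure.restrict_eq_self_of_ae_mem hae]
  rw [h1, setIntegral_finset S (integrableOn_finset' S f P)]
  simp only [smul_eq_mul]; rfl

lemma sum_w_eq_one {P : Measure ℝ} [IsProbabilityMeasure P] {S : Finset ℝ}
    (hPS : P ((↑S : Set ℝ)ᶜ) = 0) :
    ∑ s ∈ S, (P {s}).toReal = 1 := by
  have h := integral_eq_sum hPS (fun _ => (1 : ℝ))
  simpa using h.symm

lemma exists_pos_w {P : Measure ℝ} [IsProbabilityMeasure P] {S : Finset ℝ}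
    (hPS : P ((↑S : Set ℝ)ᶜ) = 0) :
    ∃ t ∈ S, 0 < (P {t}).toReal := by
  by_contra h
  push_neg at h
  have h0 : ∑ s ∈ S, (P {s}).toReal = 0 :=
    Finset.sum_eq_zero fun s hs => le_antisymm (h s hs) ENNReal.toReal_nonneg
  rw [sum_w_eq_one hPS] at h0
  norm_num at h0

/-- Numerator of the explicit posterior mean. -/
def pmN (S : Finset ℝ) (P : Measure ℝ) (γ x₀ z : ℝ) : ℝ :=
  ∑ s ∈ S, (P {s}).toReal * (s * scalarWeight γ x₀ z s)

/-- Denominator of the explicit posterior mean. -/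
def pmD (S : Finset ℝ) (P : Measure ℝ) (γ x₀ z : ℝ) : ℝ :=
  ∑ s ∈ S, (P {s}).toReal * scalarWeight γ x₀ z s

lemma postMean_eq {P : Measure ℝ} [IsProbabilityMeasure P] {S : Finset ℝ}
    (hPS : P ((↑S : Set ℝ)ᶜ) = 0) (γ x₀ z : ℝ) :
    postMean P γ x₀ z = pmN S P γ x₀ z / pmD S P γ x₀ z := by
  unfold postMean pmN pmD
  rw [integral_eq_sum hPS, integral_eq_sum hPS]

lemma pmD_pos {P : Measure ℝ} [IsProbabilityMeasure P] {S : Finset ℝ}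
    (hPS : P ((↑S : Set ℝ)ᶜ) = 0) (γ x₀ z : ℝ) : 0 < pmD S P γ x₀ z := by
  obtain ⟨t, ht, hw⟩ := exists_pos_w hPS
  have h1 : ∀ s ∈ S, 0 ≤ (P {s}).toReal * scalarWeight γ x₀ z s := fun s _ =>
    mul_nonneg ENNReal.toReal_nonneg (by unfold scalarWeight; exact (Real.exp_pos _).le)
  calc (0:ℝ) < (P {t}).toReal * scalarWeight γ x₀ z t :=
        mul_pos hw (by unfold scalarWeight; exact Real.exp_pos _)
    _ ≤ pmD S P γ x₀ z := Finset.single_le_sum h1 ht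

lemma abs_ratio_le {P : Measure ℝ} [IsProbabilityMeasure P] {S : Finset ℝ} {K₀ : ℝ}
    (hPS : P ((↑S : Set ℝ)ᶜ) = 0) (hSK : ∀ x ∈ S, |x| ≤ K₀) (γ x₀ z : ℝ) :
    |pmN S P γ x₀ z / pmD S P γ x₀ z| ≤ K₀ := by
  have hD := pmD_pos hPS (S := S) γ x₀ z
  rw [abs_div, abs_of_pos hD, div_le_iff₀ hD]
  calc |pmN S P γ x₀ z| ≤ ∑ s ∈ S, |(P {s}).toReal * (s * scalarWeight γ x₀ z s)| :=
        Finset.abs_sum_le_sum_abs _ _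
    _ ≤ ∑ s ∈ S, K₀ * ((P {s}).toReal * scalarWeight γ x₀ z s) := by
        apply Finset.sum_le_sum
        intro s hs
        have hE : 0 < scalarWeight γ x₀ z s := by unfold scalarWeight; exact Real.exp_pos _
        have hw : (0:ℝ) ≤ (P {s}).toReal := ENNReal.toReal_nonneg
        have hsK := hSK s hs
        rw [abs_mul, abs_mul, abs_of_nonneg hw, abs_of_pos hE]
        nlinarith [mul_nonneg (sub_nonneg.2 hsK) (mul_nonneg hw hE.le)]
    _ = K₀ * pmD S P γ x₀ z := by unfold pmD; rw [Finset.mul_sum]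

lemma continuous_sW_gamma (x₀ z s : ℝ) : Continuous fun γ => scalarWeight γ x₀ z s := by
  unfold scalarWeight; fun_prop

lemma continuous_sW_pair (γ s : ℝ) : Continuous fun p : ℝ × ℝ => scalarWeight γ p.1 p.2 s := by
  unfold scalarWeight; fun_prop

lemma continuous_ratio_gamma {P : Measure ℝ} [IsProbabilityMeasure P] {S : Finset ℝ}
    (hPS : P ((↑S : Set ℝ)ᶜ) = 0) (x₀ z : ℝ) :
    Continuous fun γ => pmN S P γ x₀ z / pmD S P γ x₀ z := by
  apply Continuous.div
  · exact continuous_finset_sum _ fun s _ =>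
      (continuous_const.mul (continuous_const.mul (continuous_sW_gamma x₀ z s)))
  · exact continuous_finset_sum _ fun s _ =>
      (continuous_const.mul (continuous_sW_gamma x₀ z s))
  · exact fun γ => (pmD_pos hPS γ x₀ z).ne'

lemma continuous_integrand_pair {P : Measure ℝ} [IsProbabilityMeasure P] {S : Finset ℝ}
    (hPS : P ((↑S : Set ℝ)ᶜ) = 0) (γ : ℝ) :
    Continuous fun p : ℝ × ℝ => p.1 * (pmN S P γ p.1 p.2 / pmD S P γ p.1 p.2) := by
  apply continuous_fst.mul
  apply Continuous.div
  · exact continuous_finset_sum _ fun s _ =>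
      (continuous_const.mul (continuous_const.mul (continuous_sW_pair γ s)))
  · exact continuous_finset_sum _ fun s _ =>
      (continuous_const.mul (continuous_sW_pair γ s))
  · exact fun p => (pmD_pos hPS γ p.1 p.2).ne'

lemma ae_fst_mem {P : Measure ℝ} [IsProbabilityMeasure P] {S : Finset ℝ}
    (hPS : P ((↑S : Set ℝ)ᶜ) = 0) :
    ∀ᵐ p ∂(P.prod stdG), p.1 ∈ (↑S : Set ℝ) := by
  rw [ae_iff]
  have hset : {p : ℝ × ℝ | ¬ p.1 ∈ (↑S : Set ℝ)} = ((↑S : Set ℝ)ᶜ) ×ˢ (Set.univ : Set ℝ) := by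
    ext p; simp [Set.mem_prod]
  rw [hset, Measure.prod_prod, hPS]
  simp

lemma Fov_eq {P : Measure ℝ} [IsProbabilityMeasure P] {S : Finset ℝ} {K₀ : ℝ}
    (hPS : P ((↑S : Set ℝ)ᶜ) = 0) (hSK : ∀ x ∈ S, |x| ≤ K₀) (γ : ℝ) :
    Fov P γ = ∑ t ∈ S, (P {t}).toReal * (t * ∫ z, pmN S P γ t z / pmD S P γ t z ∂stdG) := by
  have hK0 : 0 ≤ K₀ := by
    obtain ⟨t, ht, _⟩ := exists_pos_w hPS
    exact le_trans (abs_nonneg t) (hSK t ht)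
  unfold Fov
  have hrw : ∀ p : ℝ × ℝ, p.1 * postMean P γ p.1 p.2
      = p.1 * (pmN S P γ p.1 p.2 / pmD S P γ p.1 p.2) := fun p => by
    rw [postMean_eq hPS]
  simp only [hrw]
  have hint : Integrable (fun p : ℝ × ℝ => p.1 * (pmN S P γ p.1 p.2 / pmD S P γ p.1 p.2))
      (P.prod stdG) := by
    apply Integrable.mono' (integrable_const (K₀ * K₀))
      (continuous_integrand_pair hPS γ).aestronglyMeasurable
    filter_upwards [ae_fst_mem hPS] with p hp
    rw [Real.norm_eq_abs, abs_mul]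
    have h1 : |p.1| ≤ K₀ := hSK p.1 (Finset.mem_coe.mp hp)
    have h2 : |pmN S P γ p.1 p.2 / pmD S P γ p.1 p.2| ≤ K₀ := abs_ratio_le hPS hSK γ p.1 p.2
    exact mul_le_mul h1 h2 (abs_nonneg _) hK0
  rw [MeasureTheory.integral_prod _ hint,
    integral_eq_sum hPS (fun x₀ => ∫ z, x₀ * (pmN S P γ x₀ z / pmD S P γ x₀ z) ∂stdG)]
  refine Finset.sum_congr rfl fun t ht => ?_
  rw [MeasureTheory.integral_const_mul]

lemma abs_integral_ratio_le {P : Measure ℝ} [IsProbabilityMeasure P] {S : Finset ℝ} {K₀ : ℝ}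
    (hPS : P ((↑S : Set ℝ)ᶜ) = 0) (hSK : ∀ x ∈ S, |x| ≤ K₀) (γ t : ℝ) :
    |∫ z, pmN S P γ t z / pmD S P γ t z ∂stdG| ≤ K₀ := by
  have h := norm_integral_le_of_norm_le (μ := stdG)
    (f := fun z => pmN S P γ t z / pmD S P γ t z) (integrable_const K₀)
    (ae_of_all _ fun z => by
      rw [Real.norm_eq_abs]; exact abs_ratio_le hPS hSK γ t z)
  rw [Real.norm_eq_abs] at h
  simpa using h

lemma Fov_abs_le {P : Measure ℝ} [IsProbabilityMeasure P] {S : Finset ℝ} {K₀ : ℝ}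
    (hPS : P ((↑S : Set ℝ)ᶜ) = 0) (hSK : ∀ x ∈ S, |x| ≤ K₀) (γ : ℝ) :
    |Fov P γ| ≤ K₀ ^ 2 := by
  rw [Fov_eq hPS hSK]
  calc |∑ t ∈ S, (P {t}).toReal * (t * ∫ z, pmN S P γ t z / pmD S P γ t z ∂stdG)|
      ≤ ∑ t ∈ S, |(P {t}).toReal * (t * ∫ z, pmN S P γ t z / pmD S P γ t z ∂stdG)| :=
        Finset.abs_sum_le_sum_abs _ _
    _ ≤ ∑ t ∈ S, (P {t}).toReal * (K₀ * K₀) := by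
        apply Finset.sum_le_sum
        intro t ht
        rw [abs_mul, abs_mul, abs_of_nonneg (ENNReal.toReal_nonneg :
          (0:ℝ) ≤ (P {t}).toReal)]
        apply mul_le_mul_of_nonneg_left _ ENNReal.toReal_nonneg
        exact mul_le_mul (hSK t ht) (abs_integral_ratio_le hPS hSK γ t) (abs_nonneg _)
          (le_trans (abs_nonneg t) (hSK t ht))
    _ = K₀ ^ 2 := by rw [← Finset.sum_mul, sum_w_eq_one hPS, one_mul, sq]

lemma Fov_continuous {P : Measure ℝ} [IsProbabilityMeasure P] {S : Finset ℝ} {K₀ : ℝ}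
    (hPS : P ((↑S : Set ℝ)ᶜ) = 0) (hSK : ∀ x ∈ S, |x| ≤ K₀) :
    Continuous (Fov P) := by
  have heq : Fov P = fun γ =>
      ∑ t ∈ S, (P {t}).toReal * (t * ∫ z, pmN S P γ t z / pmD S P γ t z ∂stdG) :=
    funext (Fov_eq hPS hSK)
  rw [heq]
  apply continuous_finset_sum
  intro t _
  apply continuous_const.mul
  apply continuous_const.mul
  rw [continuous_iff_continuousAt]
  intro γ₀
  apply continuousAt_of_dominated (bound := fun _ => K₀)
  · exact Eventually.of_forall fun γ =>
      (Continuous.aestronglyMeasurable (by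
        apply Continuous.div
        · exact continuous_finset_sum _ fun s _ =>
            (continuous_const.mul (continuous_const.mul (by unfold scalarWeight; fun_prop)))
        · exact continuous_finset_sum _ fun s _ =>
            (continuous_const.mul (by unfold scalarWeight; fun_prop))
        · exact fun z => (pmD_pos hPS γ t z).ne'))
  · exact Eventually.of_forall fun γ => ae_of_all _ fun z => by
      rw [Real.norm_eq_abs]; exact abs_ratio_le hPS hSK γ t z
  · exact integrable_const K₀
  · exact ae_of_all _ fun z => (continuous_ratio_gamma hPS t z).continuousAt

lemma continuous_ratio_z {P : Measure ℝ} [IsProbabilityMeasure P] {S : Finset ℝ}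
    (hPS : P ((↑S : Set ℝ)ᶜ) = 0) (γ x₀ : ℝ) :
    Continuous fun z => pmN S P γ x₀ z / pmD S P γ x₀ z := by
  apply Continuous.div
  · exact continuous_finset_sum _ fun s _ =>
      (continuous_const.mul (continuous_const.mul (by unfold scalarWeight; fun_prop)))
  · exact continuous_finset_sum _ fun s _ =>
      (continuous_const.mul (by unfold scalarWeight; fun_prop))
  · exact fun z => (pmD_pos hPS γ x₀ z).ne'

lemma tendsto_exp_term (A B : ℝ) (hB : 0 < B) :
    Tendsto (fun γ => Real.exp (Real.sqrt γ * A - γ * B)) atTop (𝓝 0) := by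
  apply Real.tendsto_exp_atBot.comp
  have hev : (fun γ => Real.sqrt γ * A - γ * B)
      =ᶠ[atTop] fun γ => Real.sqrt γ * (A + -(Real.sqrt γ * B)) := by
    filter_upwards [eventually_ge_atTop (0:ℝ)] with γ hγ
    have h2 : Real.sqrt γ * Real.sqrt γ = γ := Real.mul_self_sqrt hγ
    have h3 : Real.sqrt γ * (A + -(Real.sqrt γ * B))
        = Real.sqrt γ * A - (Real.sqrt γ * Real.sqrt γ) * B := by ring
    rw [h3, h2]
  apply Tendsto.congr' hev.symm
  exact sqrt_tendsto_atTop'.atTop_mul_atBot₀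
    (tendsto_atBot_add_const_left _ A
      (tendsto_neg_atTop_atBot.comp (sqrt_tendsto_atTop'.atTop_mul_const hB)))

lemma ratio_tendsto {P : Measure ℝ} [IsProbabilityMeasure P] {S : Finset ℝ}
    (hPS : P ((↑S : Set ℝ)ᶜ) = 0) {t : ℝ} (ht : t ∈ S)
    (hwt : 0 < (P {t}).toReal) (z : ℝ) :
    Tendsto (fun γ => pmN S P γ t z / pmD S P γ t z) atTop (𝓝 t) := by
  set w : ℝ → ℝ := fun s => (P {s}).toReal with hw
  set d : ℝ → ℝ → ℝ :=
    fun s γ => Real.sqrt γ * ((s - t) * z) - γ * ((s - t) ^ 2 / 2) with hd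
  have key : (fun γ => pmN S P γ t z / pmD S P γ t z) =ᶠ[atTop]
      fun γ => (∑ s ∈ S, w s * (s * Real.exp (d s γ)))
        / (∑ s ∈ S, w s * Real.exp (d s γ)) := by
    apply Eventually.of_forall
    intro γ
    have hE : scalarWeight γ t z t ≠ 0 := by unfold scalarWeight; exact Real.exp_ne_zero _
    have hexp : ∀ s : ℝ, Real.exp (d s γ) * scalarWeight γ t z t = scalarWeight γ t z s := by
      intro s
      unfold scalarWeight
      rw [← Real.exp_add]
      congr 1
      simp only [hd]
      ring
    have ha : pmN S P γ t z = (∑ s ∈ S, w s * (s * Real.exp (d s γ))) * scalarWeight γ t z t := by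
      unfold pmN
      rw [Finset.sum_mul]
      refine Finset.sum_congr rfl fun s _ => ?_
      rw [← hexp s]
      ring
    have hb : pmD S P γ t z = (∑ s ∈ S, w s * Real.exp (d s γ)) * scalarWeight γ t z t := by
      unfold pmD
      rw [Finset.sum_mul]
      refine Finset.sum_congr rfl fun s _ => ?_
      rw [← hexp s]
      ring
    show pmN S P γ t z / pmD S P γ t z
        = (∑ s ∈ S, w s * (s * Real.exp (d s γ))) / (∑ s ∈ S, w s * Real.exp (d s γ))
    rw [ha, hb, mul_div_mul_right _ _ hE]
  have hnum : Tendsto (fun γ => ∑ s ∈ S, w s * (s * Real.exp (d s γ))) atTop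
      (𝓝 (w t * t)) := by
    have hval : w t * t = ∑ s ∈ S, (if s = t then w s * s else 0) := by
      rw [Finset.sum_ite_eq' S t (fun s => w s * s)]
      simp [ht]
    rw [hval]
    apply tendsto_finset_sum
    intro s hs
    by_cases hst : s = t
    · subst hst
      have hdz : ∀ γ, d s γ = 0 := fun γ => by simp [hd]
      simp only [if_pos rfl, hdz, Real.exp_zero, mul_one]
      exact tendsto_const_nhds
    · simp only [if_neg hst]
      have hne : s - t ≠ 0 := sub_ne_zero.mpr hst
      have hB : 0 < (s - t) ^ 2 / 2 := by positivity
      have h0 := tendsto_exp_term ((s - t) * z) ((s - t) ^ 2 / 2) hB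
      have h1 := (h0.const_mul s).const_mul (w s)
      simpa using h1
  have hden : Tendsto (fun γ => ∑ s ∈ S, w s * Real.exp (d s γ)) atTop (𝓝 (w t)) := by
    have hval : w t = ∑ s ∈ S, (if s = t then w s else 0) := by
      rw [Finset.sum_ite_eq' S t (fun s => w s)]
      simp [ht]
    rw [hval]
    apply tendsto_finset_sum
    intro s hs
    by_cases hst : s = t
    · subst hst
      have hdz : ∀ γ, d s γ = 0 := fun γ => by simp [hd]
      simp only [if_pos rfl, hdz, Real.exp_zero, mul_one]
      exact tendsto_const_nhds
    · simp only [if_neg hst]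
      have hne : s - t ≠ 0 := sub_ne_zero.mpr hst
      have hB : 0 < (s - t) ^ 2 / 2 := by positivity
      have h0 := tendsto_exp_term ((s - t) * z) ((s - t) ^ 2 / 2) hB
      have h1 := h0.const_mul (w s)
      simpa using h1
  have hdiv := hnum.div hden hwt.ne'
  have h2 : w t * t / w t = t := mul_div_cancel_left₀ t hwt.ne'
  rw [h2] at hdiv
  exact Tendsto.congr' key.symm hdiv

lemma Fov_tendsto {P : Measure ℝ} [IsProbabilityMeasure P] {S : Finset ℝ} {K₀ : ℝ}
    (hPS : P ((↑S : Set ℝ)ᶜ) = 0) (hSK : ∀ x ∈ S, |x| ≤ K₀) :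
    Tendsto (Fov P) atTop (𝓝 (∫ x, x ^ 2 ∂P)) := by
  rw [integral_eq_sum hPS (fun x => x ^ 2)]
  have heq : Fov P = fun γ =>
      ∑ t ∈ S, (P {t}).toReal * (t * ∫ z, pmN S P γ t z / pmD S P γ t z ∂stdG) :=
    funext (Fov_eq hPS hSK)
  rw [heq]
  apply tendsto_finset_sum
  intro t ht
  rcases (ENNReal.toReal_nonneg : (0:ℝ) ≤ (P {t}).toReal).eq_or_lt with h0 | hpos
  · simp only [← h0, zero_mul]
    exact tendsto_const_nhds
  · have hI : Tendsto (fun γ => ∫ z, pmN S P γ t z / pmD S P γ t z ∂stdG) atTop (𝓝 t) := by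
      have hlim := tendsto_integral_filter_of_dominated_convergence (μ := stdG)
        (F := fun γ z => pmN S P γ t z / pmD S P γ t z) (f := fun _ => t)
        (bound := fun _ => K₀)
        (Eventually.of_forall fun γ => (continuous_ratio_z hPS γ t).aestronglyMeasurable)
        (Eventually.of_forall fun γ => ae_of_all _ fun z => by
          rw [Real.norm_eq_abs]; exact abs_ratio_le hPS hSK γ t z)
        (integrable_const K₀)
        (ae_of_all _ fun z => ratio_tendsto hPS ht hpos z)
      simpa using hlim
    have h1 := (hI.const_mul t).const_mul ((P {t}).toReal)
    simpa [pow_two] using h1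

lemma m2_le_K2 {P : Measure ℝ} [IsProbabilityMeasure P] {S : Finset ℝ} {K₀ : ℝ}
    (hPS : P ((↑S : Set ℝ)ᶜ) = 0) (hSK : ∀ x ∈ S, |x| ≤ K₀) :
    ∫ x, x ^ 2 ∂P ≤ K₀ ^ 2 := by
  rw [integral_eq_sum hPS (fun x => x ^ 2)]
  calc ∑ s ∈ S, (P {s}).toReal * s ^ 2 ≤ ∑ s ∈ S, (P {s}).toReal * K₀ ^ 2 := by
        apply Finset.sum_le_sum
        intro s hs
        apply mul_le_mul_of_nonneg_left _ ENNReal.toReal_nonneg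
        have h := abs_le.mp (hSK s hs)
        nlinarith [h.1, h.2]
    _ = K₀ ^ 2 := by rw [← Finset.sum_mul, sum_w_eq_one hPS, one_mul]

end AuxFP

/-- **Existence of a non-trivial fixed point at high signal.** -/
theorem nontrivial_fixed_point_high_signal
    (K₀ : ℝ) (S : Finset ℝ) (hSK : ∀ x ∈ S, |x| ≤ K₀)
    (PU PV : Measure ℝ) [IsProbabilityMeasure PU] [IsProbabilityMeasure PV]
    (hUS : PU ((↑S : Set ℝ)ᶜ) = 0) (hVS : PV ((↑S : Set ℝ)ᶜ) = 0)
    (hUvar : 0 < (∫ x, x ^ 2 ∂PU) - (∫ x, x ∂PU) ^ 2)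
    (hVvar : 0 < (∫ x, x ^ 2 ∂PV) - (∫ x, x ∂PV) ^ 2) :
    ∃ η > (0 : ℝ), ∃ lam₀ > (0 : ℝ), ∀ lam ≥ lam₀,
      ∃ q ∈ Gam PU PV lam, η ≤ q.1 ∧ η ≤ q.2 := by
  set mU := ∫ x, x ^ 2 ∂PU with hmUdef
  set mV := ∫ x, x ^ 2 ∂PV with hmVdef
  have hmU : 0 < mU := lt_of_le_of_lt (sq_nonneg (∫ x, x ∂PU)) (by linarith)
  have hmV : 0 < mV := lt_of_le_of_lt (sq_nonneg (∫ x, x ∂PV)) (by linarith)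
  set η := min mU mV / 2 with hηdef
  have hη : 0 < η := by
    have := lt_min hmU hmV
    positivity
  -- eventual lower bounds for Fov
  have hevU : ∀ᶠ γ in (atTop : Filter ℝ), mU / 2 ≤ Fov PU γ :=
    (Fov_tendsto hUS hSK).eventually (eventually_ge_nhds (by linarith))
  have hevV : ∀ᶠ γ in (atTop : Filter ℝ), mV / 2 ≤ Fov PV γ :=
    (Fov_tendsto hVS hSK).eventually (eventually_ge_nhds (by linarith))
  obtain ⟨γ₀, hγ₀⟩ := eventually_atTop.mp (hevU.and hevV)
  set γ₁ := max γ₀ 0 with hγ₁def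
  refine ⟨η, hη, (γ₁ + 1) / η, by positivity, ?_⟩
  intro lam hlam
  have hlam₀pos : 0 < (γ₁ + 1) / η := by positivity
  have hlampos : 0 < lam := lt_of_lt_of_le hlam₀pos hlam
  -- for q ≥ η, lam * q ≥ γ₀
  have hkey : ∀ q : ℝ, η ≤ q → γ₀ ≤ lam * q := by
    intro q hq
    have h1 : (γ₁ + 1) / η * η ≤ lam * q :=
      mul_le_mul hlam hq hη.le hlampos.le
    rw [div_mul_cancel₀ _ hη.ne'] at h1
    have h2 : γ₀ ≤ γ₁ := le_max_left _ _
    linarith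
  have hηU : η ≤ mU / 2 := by
    rw [hηdef]
    have := min_le_left mU mV
    linarith
  have hηV : η ≤ mV / 2 := by
    rw [hηdef]
    have := min_le_right mU mV
    linarith
  set M := K₀ ^ 2 with hMdef
  have hMU : mU ≤ M := m2_le_K2 hUS hSK
  have hηM : η ≤ M := by linarith
  -- the composite map
  set g : ℝ → ℝ := fun q => Fov PV (lam * Fov PU (lam * q)) with hgdef
  have hglow : ∀ q : ℝ, η ≤ q → η ≤ g q ∧ η ≤ Fov PU (lam * q) := by
    intro q hq
    have h1 : mU / 2 ≤ Fov PU (lam * q) := (hγ₀ _ (hkey q hq)).1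
    have h2 : η ≤ Fov PU (lam * q) := le_trans hηU h1
    have h3 : mV / 2 ≤ Fov PV (lam * Fov PU (lam * q)) := (hγ₀ _ (hkey _ h2)).2
    exact ⟨le_trans hηV h3, h2⟩
  have hghigh : ∀ q : ℝ, g q ≤ M := fun q =>
    le_trans (le_abs_self _) (Fov_abs_le hVS hSK _)
  -- IVT for h(q) = g q - q on [η, M]
  have hcont : Continuous fun q : ℝ => g q - q := by
    apply Continuous.sub _ continuous_id
    exact (Fov_continuous hVS hSK).comp
      (continuous_const.mul ((Fov_continuous hUS hSK).comp (continuous_const.mul continuous_id)))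
  have hIVT := intermediate_value_Icc' hηM hcont.continuousOn
  have h0mem : (0 : ℝ) ∈ Set.Icc (g M - M) (g η - η) := by
    constructor
    · linarith [hghigh M]
    · linarith [(hglow η le_rfl).1]
  obtain ⟨q, hqIcc, hq0⟩ := hIVT h0mem
  have hqfix : Fov PV (lam * Fov PU (lam * q)) = q := by
    have : g q - q = 0 := hq0
    rw [hgdef] at this
    simpa using sub_eq_zero.mp this
  have hq1 : η ≤ q := hqIcc.1
  have hq2 : η ≤ Fov PU (lam * q) := (hglow q hq1).2
  refine ⟨(q, Fov PU (lam * q)), ⟨le_trans hη.le hq1, le_trans hη.le hq2, rfl, ?_⟩, hq1, hq2⟩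
  exact hqfix.symm
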